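/- For any esp A, the copycat structure CC_A is an esp (an event structure, with polarities inherited from A^⊥ ∥ A), and the identity function on events is a pre-strategy ccc_A : CC_A → A^⊥ ∥ A. Moreover, for events (i,a), (j,a') of CC_A, one has (i,a) ≤_{CC_A} (j,a') if and only if either i = j and a ≤_A a', or i ≠ j and there exists a'' with a ≤_A a'' ≤_A a' such that (i, a'') is negative in CC_A. -/

import Mathlib

/-- An event structure presented as raw data: a set of events, a causality
relation and a consistency predicate on (finite) sets of events. -/
structure ES where
  Evt : Type
  le : Evt → Evt → Prop
  Con : Set (Set Evt)

namespace ES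

/-- Strict causality. -/
def lt (E : ES) (a b : E.Evt) : Prop := E.le a b ∧ a ≠ b

/-- The axioms of event structures: `le` is a partial order, causes `[e]` are
finite, consistency is a nonempty collection of finite sets, closed under
subsets, containing all singletons, and closed under adding causal
dependencies. -/
def IsES (E : ES) : Prop :=
  (∀ e, E.le e e) ∧
  (∀ a b c, E.le a b → E.le b c → E.le a c) ∧
  (∀ a b, E.le a b → E.le b a → a = b) ∧
  (∀ e, {e' | E.le e' e}.Finite) ∧
  E.Con.Nonempty ∧
  (∀ X ∈ E.Con, X.Finite) ∧
  (∀ e, ({e} : Set E.Evt) ∈ E.Con) ∧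
  (∀ X ∈ E.Con, ∀ Y, Y ⊆ X → Y ∈ E.Con) ∧
  (∀ X ∈ E.Con, ∀ e ∈ X, ∀ e', E.le e' e → insert e' X ∈ E.Con)

/-- A (finite) configuration: a finite, consistent and down-closed set of events. -/
def Config (E : ES) (x : Set E.Evt) : Prop :=
  x.Finite ∧ (∀ Y, Y ⊆ x → Y.Finite → Y ∈ E.Con) ∧
  ∀ e ∈ x, ∀ e', E.le e' e → e' ∈ x

/-- Immediate causality `e ⇢ e'`. -/
def imc (E : ES) (a b : E.Evt) : Prop :=
  E.lt a b ∧ ∀ c, E.le a c → E.le c b → c = a ∨ c = b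

/-- Simple parallel composition of event structures. -/
def par (E F : ES) : ES where
  Evt := E.Evt ⊕ F.Evt
  le := fun p q =>
    match p, q with
    | Sum.inl a, Sum.inl b => E.le a b
    | Sum.inr a, Sum.inr b => F.le a b
    | _, _ => False
  Con := {X | Sum.inl ⁻¹' X ∈ E.Con ∧ Sum.inr ⁻¹' X ∈ F.Con}

/-- Projection (hiding): restrict an event structure to a subset `V` of events. -/
def proj (E : ES) (V : Set E.Evt) : ES where
  Evt := ↥V
  le := fun a b => E.le a.val b.val
  Con := {X | Subtype.val '' X ∈ E.Con}

end ES

/-- A (total) map of event structures: preserves configurations and is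
injective on each configuration. -/
def IsMap (E F : ES) (f : E.Evt → F.Evt) : Prop :=
  (∀ x, E.Config x → F.Config (f '' x)) ∧ ∀ x, E.Config x → Set.InjOn f x
/-- An event structure with polarities (`true` = positive/Player,
`false` = negative/Opponent). -/
structure ESP extends ES where
  pol : Evt → Bool

namespace ESP

/-- The dual game: polarities reversed. -/
def dual (A : ESP) : ESP where
  toES := A.toES
  pol := fun a => !A.pol a

/-- Simple parallel composition of games. -/
def par (A B : ESP) : ESP where
  toES := A.toES.par B.toES
  pol := Sum.elim A.pol B.pol

end ESP

/-- A pre-strategy on the game `A`: a polarity-preserving map of event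
structures `σ : S → A`. -/
def IsPreStrategy (S A : ESP) (σ : S.Evt → A.Evt) : Prop :=
  IsMap S.toES A.toES σ ∧ ∀ s, A.pol (σ s) = S.pol s

/-- `polExt pol b x y` means `x ⊆ y` and all events of `y \ x` have polarity `b`;
so `polExt pol true x y` is `x ⊆⁺ y` and `polExt pol false x y` is `x ⊆⁻ y`. -/
def polExt {α : Type} (pol : α → Bool) (b : Bool) (x y : Set α) : Prop :=
  x ⊆ y ∧ ∀ a ∈ y, a ∉ x → pol a = b

/-- The Scott order: `x ⊑ y` iff `x ⊇⁻ (x ∩ y) ⊆⁺ y`. -/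
def scottLE {α : Type} (pol : α → Bool) (x y : Set α) : Prop :=
  polExt pol false (x ∩ y) x ∧ polExt pol true (x ∩ y) y

/-- Courtesy: immediate causal links other than `− ⇢ +` are sent to immediate
causal links of the game. -/
def Courteous (S A : ESP) (σ : S.Evt → A.Evt) : Prop :=
  ∀ s s', S.toES.imc s s' → (S.pol s, S.pol s') ≠ (false, true) →
    A.toES.imc (σ s) (σ s')

/-- Receptivity: every negative extension of `σ x` in the game is matched by a
unique extension of `x`. -/
def Receptive (S A : ESP) (σ : S.Evt → A.Evt) : Prop :=
  ∀ x, S.toES.Config x → ∀ a, A.pol a = false → a ∉ σ '' x →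
    A.toES.Config (insert a (σ '' x)) →
    ∃! s, s ∉ x ∧ S.toES.Config (insert s x) ∧ σ s = a
/-- The generating relation of copycat causality on `A^⊥ ∥ A`:
the causality of `A^⊥ ∥ A` together with the links from each negative
occurrence to the corresponding positive occurrence on the other side. -/
def ccGen (A : ESP) : (A.Evt ⊕ A.Evt) → (A.Evt ⊕ A.Evt) → Prop :=
  fun p q => (A.dual.par A).le p q ∨
    (∃ a, A.pol a = true ∧ p = Sum.inl a ∧ q = Sum.inr a) ∨
    (∃ a, A.pol a = false ∧ p = Sum.inr a ∧ q = Sum.inl a)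

/-- The copycat structure `CC_A` on the game `A`. -/
def CC (A : ESP) : ESP where
  Evt := A.Evt ⊕ A.Evt
  le := Relation.ReflTransGen (ccGen A)
  Con := {X | {e | ∃ e' ∈ X, Relation.ReflTransGen (ccGen A) e e'} ∈ (A.dual.par A).Con}
  pol := (A.dual.par A).pol

/-- Auxiliary relation: the claimed characterisation of copycat causality. -/
def ccR (A : ESP) : (A.Evt ⊕ A.Evt) → (A.Evt ⊕ A.Evt) → Prop
  | Sum.inl a, Sum.inl a' => A.le a a'
  | Sum.inr a, Sum.inr a' => A.le a a'
  | Sum.inl a, Sum.inr a' => ∃ a'', A.le a a'' ∧ A.le a'' a' ∧ A.pol a'' = true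
  | Sum.inr a, Sum.inl a' => ∃ a'', A.le a a'' ∧ A.le a'' a' ∧ A.pol a'' = false

lemma cc_le_iff_ccR (A : ESP) (hA : A.toES.IsES) (p q : A.Evt ⊕ A.Evt) :
    (CC A).le p q ↔ ccR A p q := by
  obtain ⟨hrefl, htrans, -, -, -, -, -, -, -⟩ := hA
  constructor
  · intro h
    induction h with
    | refl => cases p with
      | inl a => exact hrefl a
      | inr a => exact hrefl a
    | tail h1 h2 ih =>
      rename_i b c
      rcases h2 with hpar | ⟨a, hpa, hb, hc⟩ | ⟨a, hpa, hb, hc⟩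
      · cases b with
        | inl b => cases c with
          | inl c =>
            cases p with
            | inl a0 => exact htrans _ _ _ ih hpar
            | inr a0 =>
              obtain ⟨a'', h1, h2, h3⟩ := ih
              exact ⟨a'', h1, htrans _ _ _ h2 hpar, h3⟩
          | inr c => exact hpar.elim
        | inr b => cases c with
          | inl c => exact hpar.elim
          | inr c =>
            cases p with
            | inl a0 =>
              obtain ⟨a'', h1, h2, h3⟩ := ih
              exact ⟨a'', h1, htrans _ _ _ h2 hpar, h3⟩
            | inr a0 => exact htrans _ _ _ ih hpar
      · subst hb; subst hc
        cases p with
        | inl a0 => exact ⟨a, ih, hrefl a, hpa⟩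
        | inr a0 =>
          obtain ⟨a'', h1, h2, h3⟩ := ih
          exact htrans _ _ _ h1 h2
      · subst hb; subst hc
        cases p with
        | inl a0 =>
          obtain ⟨a'', h1, h2, h3⟩ := ih
          exact htrans _ _ _ h1 h2
        | inr a0 => exact ⟨a, ih, hrefl a, hpa⟩
  · intro h
    cases p with
    | inl a => cases q with
      | inl a' => exact Relation.ReflTransGen.single (Or.inl h)
      | inr a' =>
        obtain ⟨a'', h1, h2, h3⟩ := h
        have s1 : ccGen A (Sum.inl a) (Sum.inl a'') := Or.inl h1
        have s2 : ccGen A (Sum.inl a'') (Sum.inr a'') := Or.inr (Or.inl ⟨a'', h3, rfl, rfl⟩)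
        have s3 : ccGen A (Sum.inr a'') (Sum.inr a') := Or.inl h2
        exact ((Relation.ReflTransGen.single s1).tail s2).tail s3
    | inr a => cases q with
      | inl a' =>
        obtain ⟨a'', h1, h2, h3⟩ := h
        have s1 : ccGen A (Sum.inr a) (Sum.inr a'') := Or.inl h1
        have s2 : ccGen A (Sum.inr a'') (Sum.inl a'') := Or.inr (Or.inr ⟨a'', h3, rfl, rfl⟩)
        have s3 : ccGen A (Sum.inl a'') (Sum.inl a') := Or.inl h2
        exact ((Relation.ReflTransGen.single s1).tail s2).tail s3
      | inr a' => exact Relation.ReflTransGen.single (Or.inl h)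

/-- Downclosure of a consistent set is consistent. -/
lemma dc_con (A : ESP) (hA : A.toES.IsES) {X : Set A.Evt} (hX : X ∈ A.Con) :
    {e | ∃ e' ∈ X, A.le e e'} ∈ A.Con := by
  obtain ⟨hrefl, -, -, hfin, -, hconfin, -, hsub, hins⟩ := hA
  have hDfin : {e | ∃ e' ∈ X, A.le e e'}.Finite := by
    have : {e | ∃ e' ∈ X, A.le e e'} ⊆ ⋃ e' ∈ X, {e | A.le e e'} := by
      intro e ⟨e', he', hle⟩; exact Set.mem_biUnion he' hle
    exact Set.Finite.subset (Set.Finite.biUnion (hconfin X hX) fun e' _ => hfin e') this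
  have key : ∀ Y : Set A.Evt, Y.Finite → Y ⊆ {e | ∃ e' ∈ X, A.le e e'} → X ∪ Y ∈ A.Con := by
    intro Y hYf
    refine Set.Finite.induction_on Y hYf (fun _ => by simpa using hX) ?_
    intro e' Y' _ _ ih hsubD
    obtain ⟨e, he, hle⟩ := hsubD (Set.mem_insert e' Y')
    have h1 : X ∪ Y' ∈ A.Con := ih fun z hz => hsubD (Set.mem_insert_of_mem _ hz)
    have := hins _ h1 e (Or.inl he) e' hle
    simpa [Set.insert_union] using this
  have := key _ hDfin (le_refl _)
  have heq : X ∪ {e | ∃ e' ∈ X, A.le e e'} = {e | ∃ e' ∈ X, A.le e e'} := by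
    apply Set.union_eq_self_of_subset_left
    intro e he; exact ⟨e, he, hrefl e⟩
  rwa [heq] at this

lemma par_con_subset (A : ESP) (hA : A.toES.IsES) {X Y : Set (A.Evt ⊕ A.Evt)}
    (hX : X ∈ (A.dual.par A).Con) (hYX : Y ⊆ X) : Y ∈ (A.dual.par A).Con := by
  obtain ⟨-, -, -, -, -, -, -, hsub, -⟩ := hA
  exact ⟨hsub _ hX.1 _ (Set.preimage_mono hYX), hsub _ hX.2 _ (Set.preimage_mono hYX)⟩

lemma par_con_finite (A : ESP) (hA : A.toES.IsES) {X : Set (A.Evt ⊕ A.Evt)}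
    (hX : X ∈ (A.dual.par A).Con) : X.Finite := by
  obtain ⟨-, -, -, -, -, hconfin, -, -, -⟩ := hA
  have : X ⊆ (Sum.inl '' (Sum.inl ⁻¹' X)) ∪ (Sum.inr '' (Sum.inr ⁻¹' X)) := by
    rintro (a | a) ha
    · exact Or.inl ⟨a, ha, rfl⟩
    · exact Or.inr ⟨a, ha, rfl⟩
  exact Set.Finite.subset (((hconfin _ hX.1).image _).union ((hconfin _ hX.2).image _)) this

/-- `CC_A` is an esp, the identity is a pre-strategy
`ccc_A : CC_A → A^⊥ ∥ A`, and causality in `CC_A` is characterised by: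
`(i, a) ≤ (j, a')` iff either `i = j` and `a ≤_A a'`, or `i ≠ j` and there is
`a''` with `a ≤_A a'' ≤_A a'` such that `(i, a'')` is negative in `CC_A`. -/
theorem copycat_is_esp_and_causality_characterisation
    (A : ESP) (hA : A.toES.IsES) :
    (CC A).toES.IsES ∧
    IsPreStrategy (CC A) (A.dual.par A) id ∧
    ∀ p q : A.Evt ⊕ A.Evt, (CC A).le p q ↔
      ((∃ a a', p = Sum.inl a ∧ q = Sum.inl a' ∧ A.le a a') ∨
       (∃ a a', p = Sum.inr a ∧ q = Sum.inr a' ∧ A.le a a') ∨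
       (∃ a a' a'', p = Sum.inl a ∧ q = Sum.inr a' ∧
          A.le a a'' ∧ A.le a'' a' ∧ (CC A).pol (Sum.inl a'') = false) ∨
       (∃ a a' a'', p = Sum.inr a ∧ q = Sum.inl a' ∧
          A.le a a'' ∧ A.le a'' a' ∧ (CC A).pol (Sum.inr a'') = false)) := by
  obtain ⟨hrefl, htrans, hanti, hfin, hne, hconfin, hsing, hsub, hins⟩ := id hA
  have polinl : ∀ a : A.Evt, ((CC A).pol (Sum.inl a) = false) ↔ A.pol a = true := by
    intro a
    show (!A.pol a) = false ↔ _
    cases A.pol a <;> simp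
  refine ⟨?_, ?_, ?_⟩
  · -- IsES
    refine ⟨fun e => Relation.ReflTransGen.refl, fun a b c h1 h2 => h1.trans h2,
      ?_, ?_, ?_, ?_, ?_, ?_, ?_⟩
    · -- antisymmetry
      intro p q h1 h2
      rw [cc_le_iff_ccR A hA p q] at h1; rw [cc_le_iff_ccR A hA q p] at h2
      cases p with
      | inl a => cases q with
        | inl b => exact congrArg Sum.inl (hanti _ _ h1 h2)
        | inr b =>
          obtain ⟨u, hau, hub, hu⟩ := h1
          obtain ⟨v, hbv, hva, hv⟩ := h2
          rw [hanti _ _ (htrans _ _ _ hub hbv) (htrans _ _ _ hva hau), hv] at hu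
          exact Bool.noConfusion hu
      | inr a => cases q with
        | inl b =>
          obtain ⟨u, hau, hub, hu⟩ := h1
          obtain ⟨v, hbv, hva, hv⟩ := h2
          rw [hanti _ _ (htrans _ _ _ hub hbv) (htrans _ _ _ hva hau), hv] at hu
          exact Bool.noConfusion hu
        | inr b => exact congrArg Sum.inr (hanti _ _ h1 h2)
    · -- causes are finite
      intro e
      cases e with
      | inl a =>
        have hss : {e' | (CC A).le e' (Sum.inl a)} ⊆
            Sum.inl '' {b | A.le b a} ∪ Sum.inr '' {b | A.le b a} := by
          rintro (b | b) hb <;> replace hb := (cc_le_iff_ccR A hA _ _).mp hb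
          · exact Or.inl ⟨b, hb, rfl⟩
          · obtain ⟨u, h1, h2, -⟩ := hb
            exact Or.inr ⟨b, htrans _ _ _ h1 h2, rfl⟩
        exact Set.Finite.subset (((hfin a).image _).union ((hfin a).image _)) hss
      | inr a =>
        have hss : {e' | (CC A).le e' (Sum.inr a)} ⊆
            Sum.inl '' {b | A.le b a} ∪ Sum.inr '' {b | A.le b a} := by
          rintro (b | b) hb <;> replace hb := (cc_le_iff_ccR A hA _ _).mp hb
          · obtain ⟨u, h1, h2, -⟩ := hb
            exact Or.inl ⟨b, htrans _ _ _ h1 h2, rfl⟩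
          · exact Or.inr ⟨b, hb, rfl⟩
        exact Set.Finite.subset (((hfin a).image _).union ((hfin a).image _)) hss
    · -- Con nonempty
      refine ⟨∅, ?_⟩
      have h0 : (∅ : Set A.Evt) ∈ A.Con := hsub _ hne.choose_spec ∅ (Set.empty_subset _)
      show {e | ∃ e' ∈ (∅ : Set (A.Evt ⊕ A.Evt)), Relation.ReflTransGen (ccGen A) e e'}
        ∈ (A.dual.par A).Con
      have hempty : {e | ∃ e' ∈ (∅ : Set (A.Evt ⊕ A.Evt)),
          Relation.ReflTransGen (ccGen A) e e'} = ∅ := by simp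
      rw [hempty]
      exact ⟨h0, h0⟩
    · -- elements of Con are finite
      intro X hX
      have hss : X ⊆ {e | ∃ e' ∈ X, Relation.ReflTransGen (ccGen A) e e'} :=
        fun e he => ⟨e, he, Relation.ReflTransGen.refl⟩
      exact (par_con_finite A hA hX).subset hss
    · -- singletons are consistent
      intro p
      show {e | ∃ e' ∈ ({p} : Set (A.Evt ⊕ A.Evt)), Relation.ReflTransGen (ccGen A) e e'}
        ∈ (A.dual.par A).Con
      have hset : {e | ∃ e' ∈ ({p} : Set (A.Evt ⊕ A.Evt)),
          Relation.ReflTransGen (ccGen A) e e'} = {e | (CC A).le e p} := by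
        ext e; constructor
        · rintro ⟨e', rfl, h⟩; exact h
        · intro h; exact ⟨p, rfl, h⟩
      rw [hset]
      cases p with
      | inl a =>
        constructor
        · refine hsub _ (dc_con A hA (hsing a)) _ ?_
          intro b hb
          exact ⟨a, rfl, (cc_le_iff_ccR A hA (Sum.inl b) (Sum.inl a)).mp hb⟩
        · refine hsub _ (dc_con A hA (hsing a)) _ ?_
          intro b hb
          obtain ⟨u, h1, h2, -⟩ := (cc_le_iff_ccR A hA (Sum.inr b) (Sum.inl a)).mp hb
          exact ⟨a, rfl, htrans _ _ _ h1 h2⟩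
      | inr a =>
        constructor
        · refine hsub _ (dc_con A hA (hsing a)) _ ?_
          intro b hb
          obtain ⟨u, h1, h2, -⟩ := (cc_le_iff_ccR A hA (Sum.inl b) (Sum.inr a)).mp hb
          exact ⟨a, rfl, htrans _ _ _ h1 h2⟩
        · refine hsub _ (dc_con A hA (hsing a)) _ ?_
          intro b hb
          exact ⟨a, rfl, (cc_le_iff_ccR A hA (Sum.inr b) (Sum.inr a)).mp hb⟩
    · -- Con closed under subsets
      intro X hX Y hYX
      exact par_con_subset A hA hX (fun e ⟨e', he', h⟩ => ⟨e', hYX he', h⟩)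
    · -- Con closed under adding causal dependencies
      intro X hX e he e' hle
      show {z | ∃ w ∈ insert e' X, Relation.ReflTransGen (ccGen A) z w} ∈ (A.dual.par A).Con
      have hset : {z | ∃ w ∈ insert e' X, Relation.ReflTransGen (ccGen A) z w}
          = {z | ∃ w ∈ X, Relation.ReflTransGen (ccGen A) z w} := by
        ext z
        constructor
        · rintro ⟨w, hw, hzw⟩
          rcases Set.mem_insert_iff.mp hw with rfl | hwX
          · exact ⟨e, he, hzw.trans hle⟩
          · exact ⟨w, hwX, hzw⟩
        · rintro ⟨w, hw, hzw⟩
          exact ⟨w, Set.mem_insert_of_mem _ hw, hzw⟩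
      rw [hset]
      exact hX
  · -- pre-strategy
    refine ⟨⟨?_, ?_⟩, fun s => rfl⟩
    · intro x hx
      obtain ⟨hxf, hxcon, hxdc⟩ := hx
      erw [Set.image_id]
      refine ⟨hxf, ?_, ?_⟩
      · intro Y hY hYf
        exact par_con_subset A hA (hxcon Y hY hYf)
          (fun e he => ⟨e, he, Relation.ReflTransGen.refl⟩)
      · intro e he e' hle
        exact hxdc e he e' (Relation.ReflTransGen.single (Or.inl hle))
    · intro x _
      exact fun a _ b _ h => h
  · -- characterisation of causality
    intro p q
    rw [cc_le_iff_ccR A hA]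
    cases p with
    | inl a => cases q with
      | inl a' =>
        constructor
        · intro h
          exact Or.inl ⟨a, a', rfl, rfl, h⟩
        · rintro (⟨b, b', hb, hb', h⟩ | ⟨b, b', hb, hb', h⟩ |
            ⟨b, b', b'', hb, hb', h⟩ | ⟨b, b', b'', hb, hb', h⟩)
          · obtain rfl := Sum.inl.inj hb
            obtain rfl := Sum.inl.inj hb'
            exact h
          · cases hb
          · cases hb'
          · cases hb
      | inr a' =>
        constructor
        · rintro ⟨u, h1, h2, h3⟩
          exact Or.inr (Or.inr (Or.inl ⟨a, a', u, rfl, rfl, h1, h2, (polinl u).mpr h3⟩))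
        · rintro (⟨b, b', hb, hb', h⟩ | ⟨b, b', hb, hb', h⟩ |
            ⟨b, b', b'', hb, hb', h1, h2, h3⟩ | ⟨b, b', b'', hb, hb', h⟩)
          · cases hb'
          · cases hb
          · obtain rfl := Sum.inl.inj hb
            obtain rfl := Sum.inr.inj hb'
            exact ⟨b'', h1, h2, (polinl b'').mp h3⟩
          · cases hb
    | inr a => cases q with
      | inl a' =>
        constructor
        · rintro ⟨u, h1, h2, h3⟩
          exact Or.inr (Or.inr (Or.inr ⟨a, a', u, rfl, rfl, h1, h2, h3⟩))
        · rintro (⟨b, b', hb, hb', h⟩ | ⟨b, b', hb, hb', h⟩ |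
            ⟨b, b', b'', hb, hb', h⟩ | ⟨b, b', b'', hb, hb', h1, h2, h3⟩)
          · cases hb
          · cases hb'
          · cases hb
          · obtain rfl := Sum.inr.inj hb
            obtain rfl := Sum.inl.inj hb'
            exact ⟨b'', h1, h2, h3⟩
      | inr a' =>
        constructor
        · intro h
          exact Or.inr (Or.inl ⟨a, a', rfl, rfl, h⟩)
        · rintro (⟨b, b', hb, hb', h⟩ | ⟨b, b', hb, hb', h⟩ |
            ⟨b, b', b'', hb, hb', h⟩ | ⟨b, b', b'', hb, hb', h⟩)
          · cases hb
          · obtain rfl := Sum.inr.inj hb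
            obtain rfl := Sum.inr.inj hb'
            exact h
          · cases hb
          · cases hb'
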